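/- Let d = 1, γ ∈ (1,3), and 0 < C₀ ≤ C₁, C₂ > 0. There exists a constant C > 0, depending only on γ, C₀, C₁ and C₂, such that for all ρ₁, ρ₂ ∈ [C₀, C₁] and all u₁, u₂ ∈ ℝ with |u₁| ≤ C₂ and |u₂| ≤ C₂, one has ∫_{ℝ} (1 + v²) | M_{ρ₁,u₁}(v) - M_{ρ₂,u₂}(v) | dv ≤ C ( |ρ₁ - ρ₂| + |u₁ - u₂| ), where M_{ρ,u} is the one-dimensional positive-part equilibrium function. -/
import Mathlib


open MeasureTheory Real

noncomputable section

/-- The exponent `n = 2/(γ-1) - d`, here with `d = 1`. -/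
def nExp (d : ℕ) (γ : ℝ) : ℝ := 2 / (γ - 1) - d

/-- The normalizing constant
`c = (2γ/(γ-1))^{-1/(γ-1)} Γ(γ/(γ-1)) / (π^{d/2} Γ(n/2+1))`. -/
def cConst (d : ℕ) (γ : ℝ) : ℝ :=
  (2 * γ / (γ - 1)) ^ (-(1 / (γ - 1))) * Real.Gamma (γ / (γ - 1)) /
    (Real.pi ^ ((d : ℝ) / 2) * Real.Gamma (nExp d γ / 2 + 1))

/-- The one-dimensional positive-part equilibrium function
`M_{ρ,u}(v) = c ((2γ/(γ-1)) ρ^{γ-1} - (v-u)²)_+^{n/2}`. -/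
def Mpos1 (γ ρ u v : ℝ) : ℝ :=
  cConst 1 γ * (max (2 * γ / (γ - 1) * ρ ^ (γ - 1) - (v - u) ^ 2) 0) ^ (nExp 1 γ / 2)

namespace LipAux

open Set

/-- profile function -/
def h (p a b v : ℝ) : ℝ := (max (a - (v - b) ^ 2) 0) ^ p

lemma h_nonneg (p a b v : ℝ) : 0 ≤ h p a b v := Real.rpow_nonneg (le_max_right _ _) p

lemma h_cont (p a b : ℝ) (hp : 0 ≤ p) : Continuous (h p a b) := by
  apply Continuous.rpow_const
  · fun_prop
  · intro x; exact Or.inr hp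

lemma h_compactSupport (p a b : ℝ) (ha : 0 ≤ a) (hp : p ≠ 0) :
    HasCompactSupport (h p a b) := by
  apply HasCompactSupport.intro (isCompact_Icc (a := b - Real.sqrt a) (b := b + Real.sqrt a))
  intro v hv
  simp only [Set.mem_Icc, not_and_or, not_le] at hv
  have hs := Real.sq_sqrt ha
  have hs' := Real.sqrt_nonneg a
  have hle : a - (v - b) ^ 2 ≤ 0 := by rcases hv with hv | hv <;> nlinarith
  simp [h, max_eq_right hle, Real.zero_rpow hp]

lemma h_integrable (p a b : ℝ) (hp : 0 < p) (ha : 0 ≤ a) : Integrable (h p a b) :=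
  (h_cont p a b hp.le).integrable_of_hasCompactSupport (h_compactSupport p a b ha hp.ne')

lemma h_shift (p a b v : ℝ) : h p a b v = h p a 0 (v - b) := by simp [h]

lemma h_le (p a b v : ℝ) (hp : 0 ≤ p) (ha : 0 ≤ a) : h p a b v ≤ a ^ p :=
  Real.rpow_le_rpow (le_max_right _ _) (max_le (by nlinarith [sq_nonneg (v - b)]) ha) hp

lemma h_mass (p a b : ℝ) (hp : 0 < p) (ha : 0 < a) :
    ∫ v, h p a b v = a ^ (p + 1 / 2) * ∫ w, h p 1 0 w := by
  have h1 : ∫ v, h p a b v = ∫ v, h p a 0 v := by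
    have hb : h p a b = fun v => h p a 0 (v - b) := funext (h_shift p a b)
    rw [hb]
    exact integral_sub_right_eq_self (h p a 0) b
  have hs0 : (0:ℝ) < Real.sqrt a := Real.sqrt_pos.mpr ha
  have h2 : ∀ w : ℝ, h p a 0 (Real.sqrt a * w) = a ^ p * h p 1 0 w := by
    intro w
    have e1 : a - (Real.sqrt a * w - 0) ^ 2 = a * (1 - (w - 0) ^ 2) := by
      have := Real.sq_sqrt ha.le
      ring_nf
      nlinarith [Real.sq_sqrt ha.le]
    rw [h, h, e1, ← mul_zero a, ← mul_max_of_nonneg _ _ ha.le, mul_zero,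
      Real.mul_rpow ha.le (le_max_right _ _)]
  have h3 := MeasureTheory.Measure.integral_comp_mul_left (h p a 0) (Real.sqrt a)
  simp only [h2] at h3
  rw [integral_const_mul] at h3
  rw [h1]
  have h3' : a ^ p * ∫ w, h p 1 0 w = (Real.sqrt a)⁻¹ * ∫ v, h p a 0 v := by
    rw [h3, smul_eq_mul, abs_of_pos (inv_pos.mpr hs0)]
  have h4 : ∫ v, h p a 0 v = Real.sqrt a * (a ^ p * ∫ w, h p 1 0 w) := by
    rw [h3']; field_simp
  rw [h4, Real.sqrt_eq_rpow, ← mul_assoc, ← Real.rpow_add ha]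
  ring_nf

lemma partA (p : ℝ) (hp : 0 < p) {a₁ a₂ : ℝ} (ha₁ : 0 < a₁) (h12 : a₁ ≤ a₂) (b : ℝ) :
    ∫ v, |h p a₁ b v - h p a₂ b v| =
      (a₂ ^ (p + 1 / 2) - a₁ ^ (p + 1 / 2)) * ∫ w, h p 1 0 w := by
  have hmono : ∀ v, h p a₁ b v ≤ h p a₂ b v := fun v =>
    Real.rpow_le_rpow (le_max_right _ _) (max_le_max (by linarith) le_rfl) hp.le
  have habs : ∀ v, |h p a₁ b v - h p a₂ b v| = h p a₂ b v - h p a₁ b v := fun v => by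
    rw [abs_sub_comm, abs_of_nonneg (sub_nonneg.2 (hmono v))]
  simp_rw [habs]
  rw [integral_sub (h_integrable p a₂ b hp (by linarith)) (h_integrable p a₁ b hp ha₁.le),
    h_mass p a₂ b hp (by linarith), h_mass p a₁ b hp ha₁, ← sub_mul]

lemma setIntegral_Ici_shift (f : ℝ → ℝ) (m b : ℝ) :
    ∫ v in Ici m, f (v - b) = ∫ v in Ici (m - b), f v := by
  rw [← integral_indicator measurableSet_Ici, ← integral_indicator measurableSet_Ici,
    ← integral_sub_right_eq_self ((Ici (m - b)).indicator f) b]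
  congr 1; funext v
  simp only [Set.indicator, Set.mem_Ici]
  by_cases hv : m ≤ v
  · rw [if_pos hv, if_pos (by linarith)]
  · rw [if_neg hv, if_neg (by intro hcon; exact hv (by linarith))]

lemma partB (p : ℝ) (hp : 0 < p) {a b₁ b₂ : ℝ} (ha : 0 < a) (hb : b₁ ≤ b₂) :
    ∫ v, |h p a b₁ v - h p a b₂ v| ≤ 2 * a ^ p * (b₂ - b₁) := by
  set m : ℝ := (b₁ + b₂) / 2 with hm
  have hi1 : Integrable (h p a b₁) := h_integrable p a b₁ hp ha.le
  have hi2 : Integrable (h p a b₂) := h_integrable p a b₂ hp ha.le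
  have hi0 : Integrable (h p a 0) := h_integrable p a 0 hp ha.le
  have hiF : Integrable (fun v => |h p a b₁ v - h p a b₂ v|) := (hi1.sub hi2).abs
  -- shift formula for Ici integrals
  have hshift : ∀ b c : ℝ, ∫ v in Ici c, h p a b v = ∫ v in Ici (c - b), h p a 0 v := by
    intro b c
    rw [← setIntegral_Ici_shift (h p a 0) c b]
    exact setIntegral_congr_fun measurableSet_Ici fun v _ => h_shift p a b v
  -- masses equal
  have hmass : ∫ v, h p a b₁ v = ∫ v, h p a b₂ v := by
    rw [h_mass p a b₁ hp ha, h_mass p a b₂ hp ha]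
  -- pointwise comparisons
  have hge : ∀ v ∈ Ici m, h p a b₁ v ≤ h p a b₂ v := by
    intro v hv
    simp only [Set.mem_Ici] at hv
    exact Real.rpow_le_rpow (le_max_right _ _)
      (max_le_max (by nlinarith) le_rfl) hp.le
  have hle : ∀ v ∈ Iio m, h p a b₂ v ≤ h p a b₁ v := by
    intro v hv
    simp only [Set.mem_Iio] at hv
    exact Real.rpow_le_rpow (le_max_right _ _)
      (max_le_max (by nlinarith) le_rfl) hp.le
  -- split the integral
  have hsplit := intervalIntegral.integral_Iio_add_Ici (b := m) hiF.integrableOn hiF.integrableOn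
  have e1 : ∫ v in Ici m, |h p a b₁ v - h p a b₂ v|
      = (∫ v in Ici m, h p a b₂ v) - ∫ v in Ici m, h p a b₁ v := by
    rw [← integral_sub (hi2.integrableOn) (hi1.integrableOn)]
    refine setIntegral_congr_fun measurableSet_Ici fun v hv => ?_
    rw [abs_sub_comm, abs_of_nonneg (sub_nonneg.2 (hge v hv))]
  have e2 : ∫ v in Iio m, |h p a b₁ v - h p a b₂ v|
      = (∫ v in Iio m, h p a b₁ v) - ∫ v in Iio m, h p a b₂ v := by
    rw [← integral_sub (hi1.integrableOn) (hi2.integrableOn)]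
    refine setIntegral_congr_fun measurableSet_Iio fun v hv => ?_
    rw [abs_of_nonneg (sub_nonneg.2 (hle v hv))]
  have s1 := intervalIntegral.integral_Iio_add_Ici (b := m) hi1.integrableOn hi1.integrableOn
  have s2 := intervalIntegral.integral_Iio_add_Ici (b := m) hi2.integrableOn hi2.integrableOn
  have key : ∫ v, |h p a b₁ v - h p a b₂ v|
      = 2 * ((∫ v in Ici m, h p a b₂ v) - ∫ v in Ici m, h p a b₁ v) := by
    rw [← hsplit, e1, e2]
    have : (∫ v in Iio m, h p a b₁ v) = (∫ v, h p a b₁ v) - ∫ v in Ici m, h p a b₁ v := by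
      linarith
    have : (∫ v in Iio m, h p a b₂ v) = (∫ v, h p a b₂ v) - ∫ v in Ici m, h p a b₂ v := by
      linarith
    linarith
  rw [key, hshift b₂ m, hshift b₁ m]
  -- now it's a difference of tails of h p a 0
  have hc : m - b₂ ≤ m - b₁ := by linarith
  have tail : (∫ v in Ici (m - b₂), h p a 0 v) - ∫ v in Ici (m - b₁), h p a 0 v
      = ∫ v in (m - b₂)..(m - b₁), h p a 0 v := by
    rw [integral_Ici_eq_integral_Ioi, integral_Ici_eq_integral_Ioi]
    have t1 := intervalIntegral.integral_Iic_add_Ioi (b := m - b₁) hi0.integrableOn hi0.integrableOn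
    have t2 := intervalIntegral.integral_Iic_add_Ioi (b := m - b₂) hi0.integrableOn hi0.integrableOn
    rw [← intervalIntegral.integral_Iic_sub_Iic hi0.integrableOn hi0.integrableOn]
    linarith
  rw [tail]
  have bound : ∫ v in (m - b₂)..(m - b₁), h p a 0 v ≤ ∫ _ in (m - b₂)..(m - b₁), a ^ p := by
    apply intervalIntegral.integral_mono_on hc hi0.intervalIntegrable
      (intervalIntegrable_const)
    exact fun v _ => h_le p a 0 v hp.le ha.le
  rw [intervalIntegral.integral_const] at bound
  have : (m - b₁) - (m - b₂) = b₂ - b₁ := by ring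
  rw [this, smul_eq_mul] at bound
  nlinarith [Real.rpow_nonneg ha.le p]

end LipAux

set_option maxHeartbeats 2000000 in
open LipAux in
theorem lipschitz_Mpos1 (γ : ℝ) (hγ : 1 < γ) (hγ' : γ < 3)
    (C₀ C₁ C₂ : ℝ) (hC₀ : 0 < C₀) (hC₀₁ : C₀ ≤ C₁) (hC₂ : 0 < C₂) :
    ∃ C : ℝ, 0 < C ∧
      ∀ ρ₁ ρ₂ : ℝ, ρ₁ ∈ Set.Icc C₀ C₁ → ρ₂ ∈ Set.Icc C₀ C₁ →
      ∀ u₁ u₂ : ℝ, |u₁| ≤ C₂ → |u₂| ≤ C₂ →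
        (∫ v : ℝ, (1 + v ^ 2) * |Mpos1 γ ρ₁ u₁ v - Mpos1 γ ρ₂ u₂ v|) ≤
          C * (|ρ₁ - ρ₂| + |u₁ - u₂|) := by
  have hγ1 : (0:ℝ) < γ - 1 := by linarith
  set p : ℝ := nExp 1 γ / 2 with hpdef
  set K : ℝ := 2 * γ / (γ - 1) with hKdef
  have hpval : p = 1 / (γ - 1) - 1 / 2 := by
    rw [hpdef]; unfold nExp; push_cast; field_simp; try ring
  have hp : 0 < p := by
    have h12 : (1:ℝ) / 2 < 1 / (γ - 1) := by
      apply one_div_lt_one_div_of_lt hγ1; linarith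
    rw [hpval]; linarith
  have hq : p + 1 / 2 = 1 / (γ - 1) := by rw [hpval]; ring
  have hK : 0 < K := div_pos (by linarith) hγ1
  set c' : ℝ := |cConst 1 γ| with hc'def
  have hc' : 0 ≤ c' := abs_nonneg _
  set a : ℝ → ℝ := fun ρ => K * ρ ^ (γ - 1) with hadef
  set β : ℝ := K * C₁ ^ (γ - 1) with hβdef
  have hC₁ : 0 < C₁ := lt_of_lt_of_le hC₀ hC₀₁
  have hβ : 0 < β := mul_pos hK (Real.rpow_pos_of_pos hC₁ _)
  set I : ℝ := ∫ w, h p 1 0 w with hIdef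
  have hI : 0 ≤ I := integral_nonneg fun w => h_nonneg p 1 0 w
  set R : ℝ := C₂ + Real.sqrt β with hRdef
  have hR : 0 < R := by positivity
  set CA : ℝ := K ^ (1 / (γ - 1)) * I with hCAdef
  set CB : ℝ := 2 * β ^ p with hCBdef
  have hCA : 0 ≤ CA := mul_nonneg (Real.rpow_nonneg hK.le _) hI
  have hCB : 0 ≤ CB := by positivity
  refine ⟨(1 + R ^ 2) * c' * (CA + CB) + 1, by positivity, ?_⟩
  intro ρ₁ ρ₂ hρ₁ hρ₂ u₁ u₂ hu₁ hu₂
  -- basic facts about a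
  have hρpos : ∀ ρ : ℝ, ρ ∈ Set.Icc C₀ C₁ → 0 < ρ := fun ρ hρ => lt_of_lt_of_le hC₀ hρ.1
  have hapos : ∀ ρ : ℝ, ρ ∈ Set.Icc C₀ C₁ → 0 < a ρ := fun ρ hρ =>
    mul_pos hK (Real.rpow_pos_of_pos (hρpos ρ hρ) _)
  have haβ : ∀ ρ : ℝ, ρ ∈ Set.Icc C₀ C₁ → a ρ ≤ β := fun ρ hρ =>
    mul_le_mul_of_nonneg_left
      (Real.rpow_le_rpow (hρpos ρ hρ).le hρ.2 hγ1.le) hK.le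
  have hamono : ∀ ρ ρ' : ℝ, ρ ∈ Set.Icc C₀ C₁ → ρ ≤ ρ' → a ρ ≤ a ρ' := by
    intro ρ ρ' hρ hle
    exact mul_le_mul_of_nonneg_left
      (Real.rpow_le_rpow (hρpos ρ hρ).le hle hγ1.le) hK.le
  have hmassρ : ∀ ρ : ℝ, ρ ∈ Set.Icc C₀ C₁ →
      (a ρ) ^ (p + 1 / 2) = K ^ (1 / (γ - 1)) * ρ := by
    intro ρ hρ
    have hρ0 : 0 < ρ := hρpos ρ hρ
    rw [hq, hadef]
    rw [Real.mul_rpow hK.le (Real.rpow_nonneg hρ0.le _),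
      ← Real.rpow_mul hρ0.le, mul_one_div, div_self hγ1.ne', Real.rpow_one]
  have hM : ∀ ρ u v : ℝ, Mpos1 γ ρ u v = cConst 1 γ * h p (a ρ) u v := fun ρ u v => rfl
  -- abbreviations
  set F : ℝ → ℝ := fun v => |h p (a ρ₁) u₁ v - h p (a ρ₂) u₂ v| with hFdef
  set F₁ : ℝ → ℝ := fun v => |h p (a ρ₁) u₁ v - h p (a ρ₂) u₁ v| with hF₁def
  set F₂ : ℝ → ℝ := fun v => |h p (a ρ₂) u₁ v - h p (a ρ₂) u₂ v| with hF₂def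
  -- vanishing outside [-R, R]
  have hvan : ∀ ρ u v : ℝ, ρ ∈ Set.Icc C₀ C₁ → |u| ≤ C₂ → v ∉ Set.Icc (-R) R →
      h p (a ρ) u v = 0 := by
    intro ρ u v hρ hu hv
    simp only [Set.mem_Icc, not_and_or, not_le] at hv
    have h1 : a ρ ≤ β := haβ ρ hρ
    have h2 : R < |v| := by
      rcases hv with hv | hv
      · rw [abs_of_neg (by linarith)]; linarith
      · rw [abs_of_pos (by linarith)]; linarith
    have h3 := abs_sub_abs_le_abs_sub v u
    have h4 := Real.sq_sqrt hβ.le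
    have h5 := Real.sqrt_nonneg β
    have h6 : a ρ - (v - u) ^ 2 ≤ 0 := by
      nlinarith [sq_abs (v - u), abs_nonneg (v - u), abs_nonneg u]
    rw [h, max_eq_right h6, Real.zero_rpow hp.ne']
  have hF0 : ∀ v : ℝ, v ∉ Set.Icc (-R) R → F v = 0 := by
    intro v hv
    rw [hFdef]
    simp only
    rw [hvan ρ₁ u₁ v hρ₁ hu₁ hv, hvan ρ₂ u₂ v hρ₂ hu₂ hv, sub_zero, abs_zero]
  -- integrability
  have hi11 : Integrable (h p (a ρ₁) u₁) := h_integrable _ _ _ hp (hapos ρ₁ hρ₁).le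
  have hi21 : Integrable (h p (a ρ₂) u₁) := h_integrable _ _ _ hp (hapos ρ₂ hρ₂).le
  have hi22 : Integrable (h p (a ρ₂) u₂) := h_integrable _ _ _ hp (hapos ρ₂ hρ₂).le
  have hFint : Integrable F := (hi11.sub hi22).abs
  have hF₁int : Integrable F₁ := (hi11.sub hi21).abs
  have hF₂int : Integrable F₂ := (hi21.sub hi22).abs
  have hFcont : Continuous F := ((h_cont _ _ _ hp.le).sub (h_cont _ _ _ hp.le)).abs
  have hFnn : ∀ v, 0 ≤ F v := fun v => abs_nonneg _
  -- weighted integrability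
  have hg1cont : Continuous (fun v : ℝ => (1 + v ^ 2) * (c' * F v)) :=
    (continuous_const.add (continuous_pow 2)).mul (continuous_const.mul hFcont)
  have hg1supp : HasCompactSupport (fun v : ℝ => (1 + v ^ 2) * (c' * F v)) := by
    apply HasCompactSupport.intro (isCompact_Icc (a := -R) (b := R))
    intro v hv
    rw [hF0 v hv, mul_zero, mul_zero]
  have hg1int : Integrable (fun v : ℝ => (1 + v ^ 2) * (c' * F v)) :=
    hg1cont.integrable_of_hasCompactSupport hg1supp
  have hg2int : Integrable (fun v : ℝ => (1 + R ^ 2) * (c' * F v)) :=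
    ((hFint.const_mul c').const_mul _)
  -- step 1 : weight reduction
  have hintegrand : (fun v : ℝ => (1 + v ^ 2) * |Mpos1 γ ρ₁ u₁ v - Mpos1 γ ρ₂ u₂ v|)
      = fun v : ℝ => (1 + v ^ 2) * (c' * F v) := by
    funext v
    rw [hM, hM, ← mul_sub, abs_mul, hc'def]
  have step1 : (∫ v : ℝ, (1 + v ^ 2) * |Mpos1 γ ρ₁ u₁ v - Mpos1 γ ρ₂ u₂ v|)
      ≤ (1 + R ^ 2) * (c' * ∫ v, F v) := by
    rw [hintegrand]
    calc ∫ v : ℝ, (1 + v ^ 2) * (c' * F v)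
        ≤ ∫ v : ℝ, (1 + R ^ 2) * (c' * F v) := by
          apply integral_mono hg1int hg2int
          intro v
          by_cases hv : v ∈ Set.Icc (-R) R
          · have hv2 : v ^ 2 ≤ R ^ 2 := sq_le_sq' hv.1 hv.2
            exact mul_le_mul_of_nonneg_right (by linarith)
              (mul_nonneg hc' (hFnn v))
          · simp [hF0 v hv]
      _ = (1 + R ^ 2) * (c' * ∫ v, F v) := by
          rw [integral_const_mul, integral_const_mul]
  -- step 2 : triangle inequality
  have step2 : (∫ v, F v) ≤ (∫ v, F₁ v) + ∫ v, F₂ v := by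
    rw [← integral_add hF₁int hF₂int]
    apply integral_mono hFint (hF₁int.add hF₂int)
    intro v
    exact abs_sub_le _ _ _
  -- step 3 : density part
  have hA : (∫ v, F₁ v) ≤ CA * |ρ₁ - ρ₂| := by
    rcases le_total ρ₁ ρ₂ with hle | hle
    · rw [hF₁def]
      simp only
      rw [partA p hp (hapos ρ₁ hρ₁) (hamono ρ₁ ρ₂ hρ₁ hle) u₁, ← hIdef,
        hmassρ ρ₂ hρ₂, hmassρ ρ₁ hρ₁, abs_sub_comm, abs_of_nonneg (sub_nonneg.2 hle)]
      apply le_of_eq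
      rw [hCAdef]; ring
    · rw [hF₁def]
      simp only [abs_sub_comm (h p (a ρ₁) u₁ _)]
      rw [partA p hp (hapos ρ₂ hρ₂) (hamono ρ₂ ρ₁ hρ₂ hle) u₁, ← hIdef,
        hmassρ ρ₂ hρ₂, hmassρ ρ₁ hρ₁, abs_of_nonneg (sub_nonneg.2 hle)]
      apply le_of_eq
      rw [hCAdef]; ring
  -- step 4 : velocity part
  have hap2β : (a ρ₂) ^ p ≤ β ^ p :=
    Real.rpow_le_rpow (hapos ρ₂ hρ₂).le (haβ ρ₂ hρ₂) hp.le
  have hB : (∫ v, F₂ v) ≤ CB * |u₁ - u₂| := by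
    rcases le_total u₁ u₂ with hle | hle
    · calc (∫ v, F₂ v) ≤ 2 * (a ρ₂) ^ p * (u₂ - u₁) :=
            partB p hp (hapos ρ₂ hρ₂) hle
        _ ≤ CB * |u₁ - u₂| := by
            rw [abs_sub_comm, abs_of_nonneg (sub_nonneg.2 hle), hCBdef]
            nlinarith [Real.rpow_nonneg (hapos ρ₂ hρ₂).le p]
    · have : (∫ v, F₂ v) = ∫ v, |h p (a ρ₂) u₂ v - h p (a ρ₂) u₁ v| := by
        rw [hF₂def]; simp only [abs_sub_comm]
      rw [this]
      calc (∫ v, |h p (a ρ₂) u₂ v - h p (a ρ₂) u₁ v|) ≤ 2 * (a ρ₂) ^ p * (u₁ - u₂) :=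
            partB p hp (hapos ρ₂ hρ₂) hle
        _ ≤ CB * |u₁ - u₂| := by
            rw [abs_of_nonneg (sub_nonneg.2 hle), hCBdef]
            nlinarith [Real.rpow_nonneg (hapos ρ₂ hρ₂).le p]
  -- conclusion
  have hX : 0 ≤ |ρ₁ - ρ₂| := abs_nonneg _
  have hY : 0 ≤ |u₁ - u₂| := abs_nonneg _
  have hFnn' : 0 ≤ ∫ v, F v := integral_nonneg hFnn
  have chain : (∫ v : ℝ, (1 + v ^ 2) * |Mpos1 γ ρ₁ u₁ v - Mpos1 γ ρ₂ u₂ v|)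
      ≤ (1 + R ^ 2) * (c' * (CA * |ρ₁ - ρ₂| + CB * |u₁ - u₂|)) := by
    refine step1.trans ?_
    apply mul_le_mul_of_nonneg_left _ (by positivity)
    apply mul_le_mul_of_nonneg_left _ hc'
    exact step2.trans (add_le_add hA hB)
  refine chain.trans ?_
  have h1R : (0:ℝ) < 1 + R ^ 2 := by positivity
  nlinarith [mul_nonneg hCA hY, mul_nonneg hCB hX, mul_nonneg hc'
      (add_nonneg (mul_nonneg hCA hX) (mul_nonneg hCB hY)),
    mul_nonneg (mul_nonneg h1R.le hc') (add_nonneg (mul_nonneg hCA hY) (mul_nonneg hCB hX)),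
    add_nonneg hX hY]
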